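/- There is no function v from the 8 vertices {e₁,e₂,e₃,e₄,d₁,d₂,d₃,d₄} of the Barnette sphere to ℤ⁴ with v(eᵢ) the i-th standard basis vector, such that for every 3-simplex {p₁,p₂,p₃,p₄} of the Barnette sphere, det[v(p₁),v(p₂),v(p₃),v(p₄)] = ±1, and for any two 3-simplices sharing a common 2-face, the corresponding determinants (in the orientations induced by a fixed orientation of the sphere) have opposite signs. Equivalently: the system of equations dᵢᵢ = −1 (i=1..4); dᵢⱼdⱼᵢ = 0 for (i,j) ∈ {(1,2),(2,3),(3,1)}; dⱼ₄ + dᵢ₄dⱼᵢ = −1 and dⱼᵢ + dⱼ₄d₄ᵢ = −1 for (i,j) ∈ {(1,2),(2,3),(3,1)}; dᵢⱼ − dₖⱼ − d₄ⱼ − dᵢⱼdₖ₄d₄ₖ = 1 for (i,j,k) ∈ {(1,2,3),(2,3,1),(3,1,2)}; and d₁₃d₃₂d₂₁ + d₁₂d₂₃d₃₁ = 0, has no integer solution (dᵢⱼ). -/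

import Mathlib

/-- The 19 facets of the Barnette sphere, as ordered 4-tuples of vertices
(`0,1,2,3` = `e₁,e₂,e₃,e₄` and `4,5,6,7` = `d₁,d₂,d₃,d₄`), each together with the sign of
the corresponding determinant prescribed by the orientation of the sphere
(Table 1 of the paper). -/
def barnetteFacets : List ((Fin 4 → Fin 8) × ℤ) :=
  [(![0,1,2,3], 1), (![4,1,2,3], -1), (![0,5,2,3], -1), (![0,1,6,3], -1),
   (![0,1,2,7], -1), (![4,5,2,3], 1), (![0,5,6,3], 1), (![4,1,6,3], 1),
   (![0,5,2,6], 1), (![0,1,6,4], 1), (![4,1,2,5], 1), (![0,1,4,7], 1),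
   (![0,6,2,7], 1), (![5,1,2,7], 1), (![0,4,6,7], 1), (![4,1,5,7], 1),
   (![6,5,2,7], 1), (![4,5,6,3], -1), (![4,5,6,7], 1)]

set_option maxHeartbeats 1000000

lemma barnette_key (A c x a B y C b z p q r : ℤ)
    (e5 : A * a = 0) (e6 : B * b = 0) (e7 : C * c = 0)
    (e8 : z + b * y = -1) (e9 : x + c * z = -1) (e10 : y + a * x = -1)
    (e11 : c + r * x = -1) (e12 : b + q * z = -1) (e13 : a + p * y = -1)
    (e14 : A - A * r * z + b * c + b * r * x + c * q * z + q * x = 1)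
    (e15 : B - B * p * x + a * c + a * r * x + c * p * y + r * y = 1)
    (e16 : C - C * q * y + a * b + a * q * z + b * p * y + p * z = 1)
    (e17 : A * B * C + A * a + B * b + C * c + a * b * c = 0) : False := by
  have habc : A * B * C + a * b * c = 0 := by
    have := e5; have := e6; have := e7; linarith
  have claim1 : ¬(a = 0 ∧ C = 0) := by
    rintro ⟨ha, hC⟩
    subst ha; subst hC
    have hy : y = -1 := by linarith
    subst hy
    have hp : p = 1 := by linarith
    subst hp
    linarith
  have claim2 : ¬(b = 0 ∧ A = 0) := by
    rintro ⟨hb, hA⟩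
    subst hb; subst hA
    have hz : z = -1 := by linarith
    subst hz
    have hq : q = 1 := by linarith
    subst hq
    linarith
  have claim3 : ¬(c = 0 ∧ B = 0) := by
    rintro ⟨hc, hB⟩
    subst hc; subst hB
    have hx : x = -1 := by linarith
    subst hx
    have hr : r = 1 := by linarith
    subst hr
    linarith
  by_cases ha : a = 0
  · have hC : C ≠ 0 := fun h => claim1 ⟨ha, h⟩
    have hc : c = 0 := (mul_eq_zero.mp e7).resolve_left hC
    have hB : B ≠ 0 := fun h => claim3 ⟨hc, h⟩
    have hb : b = 0 := (mul_eq_zero.mp e6).resolve_left hB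
    subst ha; subst hb; subst hc
    have hy : y = -1 := by linarith
    subst hy
    have hp : p = 1 := by linarith
    subst hp
    have hz : z = -1 := by linarith
    subst hz
    have hq : q = 1 := by linarith
    subst hq
    have hx : x = -1 := by linarith
    subst hx
    have hr : r = 1 := by linarith
    subst hr
    have hA : A = 1 := by linarith
    have hB1 : B = 1 := by linarith
    have hC1 : C = 1 := by linarith
    subst hA; subst hB1; subst hC1
    linarith
  · have hA : A = 0 := (mul_eq_zero.mp e5).resolve_right ha
    have hb : b ≠ 0 := fun h => claim2 ⟨h, hA⟩
    have hB : B = 0 := (mul_eq_zero.mp e6).resolve_right hb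
    have hc : c ≠ 0 := fun h => claim3 ⟨h, hB⟩
    have hC : C = 0 := (mul_eq_zero.mp e7).resolve_right hc
    subst hA; subst hB; subst hC
    have h0 : a * b * c = 0 := by linarith
    rcases mul_eq_zero.mp h0 with h | h
    · rcases mul_eq_zero.mp h with h' | h'
      · exact ha h'
      · exact hb h'
    · exact hc h

/-- there is no assignment `v` of integer vectors in `ℤ⁴` to the 8 vertices of
the Barnette sphere with `v(eᵢ)` the `i`-th standard basis vector, such that every facet
`{p₁,p₂,p₃,p₄}` has `det[v(p₁),v(p₂),v(p₃),v(p₄)] = ±1` with determinants of facets sharing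
a 2-face having opposite signs — equivalently (for a global sign `s = ±1`), such that each
facet's determinant equals `s` times the sign listed in Table 1.  Hence the Barnette sphere
cannot be the underlying simplicial complex of a toric manifold. -/
theorem barnette_no_toric :
    ¬ ∃ (v : Fin 8 → Fin 4 → ℤ) (s : ℤ), (s = 1 ∨ s = -1) ∧
      (∀ i k : Fin 4, v (Fin.castLE (by norm_num) i) k = if i = k then 1 else 0) ∧
      ∀ p ∈ barnetteFacets,
        (Matrix.of fun r k : Fin 4 => v (p.1 r) k).det = s * p.2 := by
  rintro ⟨v, s, hs, he, hf⟩
  have E0 : v 0 = ![1,0,0,0] := by funext k; fin_cases k <;> exact (he 0 _).trans (by decide)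
  have E1 : v 1 = ![0,1,0,0] := by funext k; fin_cases k <;> exact (he 1 _).trans (by decide)
  have E2 : v 2 = ![0,0,1,0] := by funext k; fin_cases k <;> exact (he 2 _).trans (by decide)
  have E3 : v 3 = ![0,0,0,1] := by funext k; fin_cases k <;> exact (he 3 _).trans (by decide)
  have F1 : (Fin.succ 2 : Fin 4) = 3 := rfl
  have F2 : Fin.succAbove (1:Fin 4) 2 = 3 := by decide
  have F3 : Fin.succAbove (2:Fin 4) 2 = 3 := by decide
  have F4 : Fin.castSucc (2:Fin 3) = 2 := rfl
  have F5 : Fin.succAbove (3:Fin 4) 2 = 2 := by decide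
  have h0 := hf (![0,1,2,3], 1) (by norm_num [barnetteFacets])
  simp [Matrix.det_succ_row_zero, Fin.sum_univ_succ, E0, E1, E2, E3, F1, F2, F3, F4, F5] at h0
  have h1 := hf (![4,1,2,3], -1) (by norm_num [barnetteFacets])
  simp [Matrix.det_succ_row_zero, Fin.sum_univ_succ, E0, E1, E2, E3, F1, F2, F3, F4, F5] at h1
  have h2 := hf (![0,5,2,3], -1) (by norm_num [barnetteFacets])
  simp [Matrix.det_succ_row_zero, Fin.sum_univ_succ, E0, E1, E2, E3, F1, F2, F3, F4, F5] at h2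
  have h3 := hf (![0,1,6,3], -1) (by norm_num [barnetteFacets])
  simp [Matrix.det_succ_row_zero, Fin.sum_univ_succ, E0, E1, E2, E3, F1, F2, F3, F4, F5] at h3
  have h4 := hf (![0,1,2,7], -1) (by norm_num [barnetteFacets])
  simp [Matrix.det_succ_row_zero, Fin.sum_univ_succ, E0, E1, E2, E3, F1, F2, F3, F4, F5] at h4
  have h5 := hf (![4,5,2,3], 1) (by norm_num [barnetteFacets])
  simp [Matrix.det_succ_row_zero, Fin.sum_univ_succ, E0, E1, E2, E3, F1, F2, F3, F4, F5] at h5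
  have h6 := hf (![0,5,6,3], 1) (by norm_num [barnetteFacets])
  simp [Matrix.det_succ_row_zero, Fin.sum_univ_succ, E0, E1, E2, E3, F1, F2, F3, F4, F5] at h6
  have h7 := hf (![4,1,6,3], 1) (by norm_num [barnetteFacets])
  simp [Matrix.det_succ_row_zero, Fin.sum_univ_succ, E0, E1, E2, E3, F1, F2, F3, F4, F5] at h7
  have h8 := hf (![0,5,2,6], 1) (by norm_num [barnetteFacets])
  simp [Matrix.det_succ_row_zero, Fin.sum_univ_succ, E0, E1, E2, E3, F1, F2, F3, F4, F5] at h8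
  have h9 := hf (![0,1,6,4], 1) (by norm_num [barnetteFacets])
  simp [Matrix.det_succ_row_zero, Fin.sum_univ_succ, E0, E1, E2, E3, F1, F2, F3, F4, F5] at h9
  have h10 := hf (![4,1,2,5], 1) (by norm_num [barnetteFacets])
  simp [Matrix.det_succ_row_zero, Fin.sum_univ_succ, E0, E1, E2, E3, F1, F2, F3, F4, F5] at h10
  have h11 := hf (![0,1,4,7], 1) (by norm_num [barnetteFacets])
  simp [Matrix.det_succ_row_zero, Fin.sum_univ_succ, E0, E1, E2, E3, F1, F2, F3, F4, F5] at h11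
  have h12 := hf (![0,6,2,7], 1) (by norm_num [barnetteFacets])
  simp [Matrix.det_succ_row_zero, Fin.sum_univ_succ, E0, E1, E2, E3, F1, F2, F3, F4, F5] at h12
  have h13 := hf (![5,1,2,7], 1) (by norm_num [barnetteFacets])
  simp [Matrix.det_succ_row_zero, Fin.sum_univ_succ, E0, E1, E2, E3, F1, F2, F3, F4, F5] at h13
  have h14 := hf (![0,4,6,7], 1) (by norm_num [barnetteFacets])
  simp [Matrix.det_succ_row_zero, Fin.sum_univ_succ, E0, E1, E2, E3, F1, F2, F3, F4, F5] at h14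
  have h15 := hf (![4,1,5,7], 1) (by norm_num [barnetteFacets])
  simp [Matrix.det_succ_row_zero, Fin.sum_univ_succ, E0, E1, E2, E3, F1, F2, F3, F4, F5] at h15
  have h16 := hf (![6,5,2,7], 1) (by norm_num [barnetteFacets])
  simp [Matrix.det_succ_row_zero, Fin.sum_univ_succ, E0, E1, E2, E3, F1, F2, F3, F4, F5] at h16
  have h17 := hf (![4,5,6,3], -1) (by norm_num [barnetteFacets])
  simp [Matrix.det_succ_row_zero, Fin.sum_univ_succ, E0, E1, E2, E3, F1, F2, F3, F4, F5] at h17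
  subst h0
  simp only [h1, h2, h3, h4] at h5 h6 h7 h8 h9 h10 h11 h12 h13 h14 h15 h16 h17
  exact barnette_key (v 4 1) (v 4 2) (v 4 3) (v 5 0) (v 5 2) (v 5 3) (v 6 0) (v 6 1) (v 6 3)
    (v 7 0) (v 7 1) (v 7 2)
    (by linear_combination -h5) (by linear_combination -h6) (by linear_combination -h7)
    (by linear_combination -h8) (by linear_combination -h9) (by linear_combination -h10)
    (by linear_combination -h11) (by linear_combination -h12) (by linear_combination -h13)
    (by linear_combination h14) (by linear_combination h15) (by linear_combination h16)
    (by linear_combination h17)
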